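/- Let S_sf = (1/4)(I₂⊗I₂ + t₁ σ₁⊗σ₁ + t₂ σ₂⊗σ₂ + t₃ σ₃⊗σ₃) be a two-qubit state in standard form (positive semidefinite). Then for every pair of complementary triples (A₁,A₂,A₃) and (B₁,B₂,B₃) of dichotomic observables, Σ_{i=1}^{3} |Cor_{S_sf}(Aᵢ, Bᵢ)| ≤ |t₁| + |t₂| + |t₃|, and this bound is attained by the triples Aᵢ = Bᵢ = σᵢ (i = 1,2,3). In particular, the total correlations of S_sf equal |t₁| + |t₂| + |t₃|. -/

import Mathlib

open Matrix Complex
open scoped Kronecker ComplexConjugate ComplexOrder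

noncomputable section

abbrev M2 : Type := Matrix (Fin 2) (Fin 2) ℂ
abbrev M4 : Type := Matrix (Fin 2 × Fin 2) (Fin 2 × Fin 2) ℂ

/-- Pauli matrix σ₁. -/
def σ1 : M2 := !![0, 1; 1, 0]
/-- Pauli matrix σ₂. -/
def σ2 : M2 := !![0, -Complex.I; Complex.I, 0]
/-- Pauli matrix σ₃. -/
def σ3 : M2 := !![1, 0; 0, -1]

/-- The Pauli triple (σ₁, σ₂, σ₃). -/
def pauli : Fin 3 → M2 := ![σ1, σ2, σ3]

/-- A dichotomic observable: Hermitian, squares to the identity, traceless. -/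
def Dichotomic (A : M2) : Prop := A.IsHermitian ∧ A * A = 1 ∧ A.trace = 0

/-- A complementary triple of dichotomic observables. -/
def ComplementaryTriple (X : Fin 3 → M2) : Prop :=
  (∀ i, Dichotomic (X i)) ∧ ∀ i j, i ≠ j → (X i * X j).trace = 0

/-- Expectation value E_S(A ⊗ B) = tr(S·(A⊗B)) (its real part; it is real for states and
Hermitian observables). -/
def EE (S : M4) (A B : M2) : ℝ := (Matrix.trace (S * (A ⊗ₖ B))).re

/-- Covariance of A and B in the state S. -/
def Cov (S : M4) (A B : M2) : ℝ := EE S A B - EE S A 1 * EE S 1 B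

/-- Variance of a dichotomic observable A measured on the first subsystem. -/
def Var1 (S : M4) (A : M2) : ℝ := 1 - (EE S A 1) ^ 2
/-- Variance of a dichotomic observable B measured on the second subsystem. -/
def Var2 (S : M4) (B : M2) : ℝ := 1 - (EE S 1 B) ^ 2

/-- The Pearson correlation coefficient of observables A and B in the state S. -/
def Cor (S : M4) (A B : M2) : ℝ := Cov S A B / Real.sqrt (Var1 S A * Var2 S B)

/-- Pauli coordinates of a 2×2 matrix. -/
def cvec (A : M2) : Fin 3 → ℝ := ![(A 0 1).re, -(A 0 1).im, (A 0 0).re]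

lemma cvec0 (A : M2) : cvec A 0 = (A 0 1).re := rfl
lemma cvec1 (A : M2) : cvec A 1 = -(A 0 1).im := rfl
lemma cvec2 (A : M2) : cvec A 2 = (A 0 0).re := rfl

lemma repr_of_herm {A : M2} (hA : A.IsHermitian) (ht : A.trace = 0) :
    A = !![(cvec A 2 : ℂ), (cvec A 0 : ℂ) - (cvec A 1 : ℂ) * Complex.I;
           (cvec A 0 : ℂ) + (cvec A 1 : ℂ) * Complex.I, -(cvec A 2 : ℂ)] := by
  have h00 : A 0 0 = ((A 0 0).re : ℂ) := (Complex.conj_eq_iff_re.mp (hA.apply 0 0)).symm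
  have h11 : A 1 1 = -A 0 0 := by
    have h := Matrix.trace_fin_two A; rw [ht] at h; linear_combination -h
  ext i j
  fin_cases i <;> fin_cases j
  · show A 0 0 = ((cvec A 2 : ℝ) : ℂ)
    rw [cvec2]; exact h00
  · show A 0 1 = ((cvec A 0 : ℝ) : ℂ) - ((cvec A 1 : ℝ) : ℂ) * Complex.I
    rw [cvec0, cvec1]; push_cast; apply Complex.ext <;> simp
  · show A 1 0 = ((cvec A 0 : ℝ) : ℂ) + ((cvec A 1 : ℝ) : ℂ) * Complex.I
    rw [← hA.apply 1 0, cvec0, cvec1]; push_cast; apply Complex.ext <;> simp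
  · show A 1 1 = -((cvec A 2 : ℝ) : ℂ)
    rw [h11, cvec2, ← h00]

lemma trace_mul_herm {A B : M2} (hA : A.IsHermitian) (htA : A.trace = 0)
    (hB : B.IsHermitian) (htB : B.trace = 0) :
    (A * B).trace = ((2 * ∑ k, cvec A k * cvec B k : ℝ) : ℂ) := by
  conv_lhs => rw [repr_of_herm hA htA, repr_of_herm hB htB]
  rw [Matrix.mul_fin_two, Matrix.trace_fin_two, Fin.sum_univ_three]
  simp only [Matrix.of_apply, Matrix.cons_val', Matrix.cons_val_zero, Matrix.cons_val_one,
    Matrix.head_cons, Matrix.empty_val', Matrix.cons_val_fin_one, Matrix.head_fin_const]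
  push_cast
  linear_combination (-2 * (cvec A 1 : ℂ) * (cvec B 1)) * Complex.I_sq

lemma trace_sigma1 {A : M2} (hA : A.IsHermitian) (htA : A.trace = 0) :
    (σ1 * A).trace = 2 * (cvec A 0 : ℂ) := by
  conv_lhs => rw [repr_of_herm hA htA, σ1]
  rw [Matrix.mul_fin_two, Matrix.trace_fin_two]
  simp only [Matrix.of_apply, Matrix.cons_val', Matrix.cons_val_zero, Matrix.cons_val_one,
    Matrix.head_cons, Matrix.empty_val', Matrix.cons_val_fin_one, Matrix.head_fin_const]
  ring

lemma trace_sigma2 {A : M2} (hA : A.IsHermitian) (htA : A.trace = 0) :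
    (σ2 * A).trace = 2 * (cvec A 1 : ℂ) := by
  conv_lhs => rw [repr_of_herm hA htA, σ2]
  rw [Matrix.mul_fin_two, Matrix.trace_fin_two]
  simp only [Matrix.of_apply, Matrix.cons_val', Matrix.cons_val_zero, Matrix.cons_val_one,
    Matrix.head_cons, Matrix.empty_val', Matrix.cons_val_fin_one, Matrix.head_fin_const]
  linear_combination (-2 * (cvec A 1 : ℂ)) * Complex.I_sq

lemma trace_sigma3 {A : M2} (hA : A.IsHermitian) (htA : A.trace = 0) :
    (σ3 * A).trace = 2 * (cvec A 2 : ℂ) := by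
  conv_lhs => rw [repr_of_herm hA htA, σ3]
  rw [Matrix.mul_fin_two, Matrix.trace_fin_two]
  simp only [Matrix.of_apply, Matrix.cons_val', Matrix.cons_val_zero, Matrix.cons_val_one,
    Matrix.head_cons, Matrix.empty_val', Matrix.cons_val_fin_one, Matrix.head_fin_const]
  ring

lemma trace_expand (t : Fin 3 → ℝ) (Ssf : M4)
    (hform : Ssf = (1/4 : ℂ) • ((1 : M2) ⊗ₖ (1 : M2)
      + (t 0 : ℂ) • (σ1 ⊗ₖ σ1) + (t 1 : ℂ) • (σ2 ⊗ₖ σ2) + (t 2 : ℂ) • (σ3 ⊗ₖ σ3)))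
    (A B : M2) :
    (Ssf * (A ⊗ₖ B)).trace = (1/4 : ℂ) * (A.trace * B.trace
      + (t 0 : ℂ) * ((σ1 * A).trace * (σ1 * B).trace)
      + (t 1 : ℂ) * ((σ2 * A).trace * (σ2 * B).trace)
      + (t 2 : ℂ) * ((σ3 * A).trace * (σ3 * B).trace)) := by
  subst hform
  simp only [Matrix.smul_mul, Matrix.add_mul, ← Matrix.mul_kronecker_mul, Matrix.one_mul,
    Matrix.trace_smul, Matrix.trace_add, Matrix.trace_kronecker, smul_eq_mul]

lemma dich_norm {A : M2} (hA : Dichotomic A) : ∑ k, cvec A k ^ 2 = 1 := by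
  obtain ⟨h1, h2, h3⟩ := hA
  have := trace_mul_herm h1 h3 h1 h3
  rw [h2] at this
  have h2' : ((2 : ℝ) : ℂ) = ((2 * ∑ k, cvec A k * cvec A k : ℝ) : ℂ) := by
    rw [← this]; simp [Matrix.trace_one]
  have := Complex.ofReal_injective h2'
  have h : ∑ k, cvec A k * cvec A k = 1 := by linarith
  calc ∑ k, cvec A k ^ 2 = ∑ k, cvec A k * cvec A k := by simp [sq]
  _ = 1 := h

lemma compl_orth {A B : M2} (hA : Dichotomic A) (hB : Dichotomic B)
    (h : (A * B).trace = 0) : ∑ k, cvec A k * cvec B k = 0 := by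
  have := trace_mul_herm hA.1 hA.2.2 hB.1 hB.2.2
  rw [h] at this
  have h0 : ((0 : ℝ) : ℂ) = ((2 * ∑ k, cvec A k * cvec B k : ℝ) : ℂ) := by
    rw [← this]; simp
  have := Complex.ofReal_injective h0
  linarith

/-- columns of the coordinate matrix of a complementary triple are unit vectors -/
lemma col_norm {X : Fin 3 → M2} (hX : ComplementaryTriple X) (k : Fin 3) :
    ∑ i, cvec (X i) k ^ 2 = 1 := by
  set O : Matrix (Fin 3) (Fin 3) ℝ := Matrix.of fun i k => cvec (X i) k with hO
  have hOOt : O * Oᵀ = 1 := by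
    ext i j
    rw [Matrix.mul_apply]
    by_cases h : i = j
    · subst h
      have := dich_norm (hX.1 i)
      simp only [Matrix.one_apply_eq, hO, Matrix.transpose_apply, Matrix.of_apply]
      rw [← this]; exact Finset.sum_congr rfl fun k _ => by ring
    · have := compl_orth (hX.1 i) (hX.1 j) (hX.2 i j h)
      simp only [Matrix.one_apply_ne h, hO, Matrix.transpose_apply, Matrix.of_apply]
      exact this
  have hOtO : Oᵀ * O = 1 := mul_eq_one_comm.mp hOOt
  have := congrArg (fun M => M k k) hOtO
  simp only [Matrix.mul_apply, Matrix.transpose_apply, Matrix.one_apply_eq, hO,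
    Matrix.of_apply] at this
  rw [← this]
  exact Finset.sum_congr rfl fun i _ => by ring

lemma trace_sigma_one : (σ1 * (1 : M2)).trace = 0 ∧ (σ2 * (1 : M2)).trace = 0 ∧
    (σ3 * (1 : M2)).trace = 0 := by
  refine ⟨?_, ?_, ?_⟩ <;> simp [σ1, σ2, σ3, Matrix.trace_fin_two]

lemma EE_A_one (t : Fin 3 → ℝ) (Ssf : M4)
    (hform : Ssf = (1/4 : ℂ) • ((1 : M2) ⊗ₖ (1 : M2)
      + (t 0 : ℂ) • (σ1 ⊗ₖ σ1) + (t 1 : ℂ) • (σ2 ⊗ₖ σ2) + (t 2 : ℂ) • (σ3 ⊗ₖ σ3)))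
    {A : M2} (htA : A.trace = 0) : EE Ssf A 1 = 0 := by
  unfold EE
  rw [trace_expand t Ssf hform A 1, htA, trace_sigma_one.1, trace_sigma_one.2.1,
    trace_sigma_one.2.2]
  simp

lemma EE_one_B (t : Fin 3 → ℝ) (Ssf : M4)
    (hform : Ssf = (1/4 : ℂ) • ((1 : M2) ⊗ₖ (1 : M2)
      + (t 0 : ℂ) • (σ1 ⊗ₖ σ1) + (t 1 : ℂ) • (σ2 ⊗ₖ σ2) + (t 2 : ℂ) • (σ3 ⊗ₖ σ3)))
    {B : M2} (htB : B.trace = 0) : EE Ssf 1 B = 0 := by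
  unfold EE
  rw [trace_expand t Ssf hform 1 B, htB, trace_sigma_one.1, trace_sigma_one.2.1,
    trace_sigma_one.2.2]
  simp

lemma Cor_eq (t : Fin 3 → ℝ) (Ssf : M4)
    (hform : Ssf = (1/4 : ℂ) • ((1 : M2) ⊗ₖ (1 : M2)
      + (t 0 : ℂ) • (σ1 ⊗ₖ σ1) + (t 1 : ℂ) • (σ2 ⊗ₖ σ2) + (t 2 : ℂ) • (σ3 ⊗ₖ σ3)))
    {A B : M2} (hA : Dichotomic A) (hB : Dichotomic B) :
    Cor Ssf A B = ∑ k, t k * cvec A k * cvec B k := by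
  have hA1 := EE_A_one t Ssf hform hA.2.2
  have hB1 := EE_one_B t Ssf hform hB.2.2
  have hEE : EE Ssf A B = ∑ k, t k * cvec A k * cvec B k := by
    unfold EE
    rw [trace_expand t Ssf hform A B, hA.2.2, trace_sigma1 hA.1 hA.2.2,
      trace_sigma2 hA.1 hA.2.2, trace_sigma3 hA.1 hA.2.2, trace_sigma1 hB.1 hB.2.2,
      trace_sigma2 hB.1 hB.2.2, trace_sigma3 hB.1 hB.2.2]
    have : (1/4 : ℂ) * ((0:ℂ) * B.trace
        + (t 0 : ℂ) * (2 * (cvec A 0 : ℂ) * (2 * (cvec B 0 : ℂ)))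
        + (t 1 : ℂ) * (2 * (cvec A 1 : ℂ) * (2 * (cvec B 1 : ℂ)))
        + (t 2 : ℂ) * (2 * (cvec A 2 : ℂ) * (2 * (cvec B 2 : ℂ))))
        = ((∑ k, t k * cvec A k * cvec B k : ℝ) : ℂ) := by
      rw [Fin.sum_univ_three]; push_cast; ring
    rw [this, Complex.ofReal_re]
  rw [Cor, Cov, Var1, Var2, hA1, hB1, hEE]
  norm_num

lemma pauli_dich (i : Fin 3) : Dichotomic (pauli i) := by
  fin_cases i <;>
    refine ⟨?_, ?_, ?_⟩ <;>
    · first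
      | (ext i j; fin_cases i <;> fin_cases j <;>
          simp [pauli, σ1, σ2, σ3, Matrix.conjTranspose_apply, Matrix.mul_apply,
            Fin.sum_univ_two, Matrix.one_apply, Complex.ext_iff])
      | simp [pauli, σ1, σ2, σ3, Matrix.trace_fin_two]

lemma cvec_pauli : cvec σ1 = ![1,0,0] ∧ cvec σ2 = ![0,1,0] ∧ cvec σ3 = ![0,0,1] := by
  refine ⟨?_, ?_, ?_⟩ <;> (funext k; fin_cases k) <;>
    simp [cvec, σ1, σ2, σ3]

/-- for a standard-form two-qubit state, the sum of absolute PCC's over any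
pair of complementary triples is bounded by `|t₁| + |t₂| + |t₃|`, and the bound is attained
by the Pauli triples Aᵢ = Bᵢ = σᵢ; hence the total correlations equal `|t₁| + |t₂| + |t₃|`. -/
theorem standard_form_total_correlations (t : Fin 3 → ℝ) (Ssf : M4)
    (hform : Ssf = (1/4 : ℂ) • ((1 : M2) ⊗ₖ (1 : M2)
      + (t 0 : ℂ) • (σ1 ⊗ₖ σ1) + (t 1 : ℂ) • (σ2 ⊗ₖ σ2) + (t 2 : ℂ) • (σ3 ⊗ₖ σ3)))
    (hpsd : Ssf.PosSemidef) :
    (∀ A B : Fin 3 → M2, ComplementaryTriple A → ComplementaryTriple B →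
      ∑ i : Fin 3, |Cor Ssf (A i) (B i)| ≤ |t 0| + |t 1| + |t 2|) ∧
    ∑ i : Fin 3, |Cor Ssf (pauli i) (pauli i)| = |t 0| + |t 1| + |t 2| := by
  have hcor : ∀ A B : M2, Dichotomic A → Dichotomic B →
      Cor Ssf A B = ∑ k, t k * cvec A k * cvec B k := fun A B hA hB => Cor_eq t Ssf hform hA hB
  constructor
  · intro A B hA hB
    have key : ∀ k : Fin 3, ∑ i, |cvec (A i) k * cvec (B i) k| ≤ 1 := by
      intro k
      have hA1 := col_norm hA k
      have hB1 := col_norm hB k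
      calc ∑ i, |cvec (A i) k * cvec (B i) k|
          ≤ ∑ i, (cvec (A i) k ^ 2 + cvec (B i) k ^ 2) / 2 := by
            refine Finset.sum_le_sum fun i _ => ?_
            rw [abs_mul]
            nlinarith [sq_nonneg (|cvec (A i) k| - |cvec (B i) k|), _root_.sq_abs (cvec (A i) k),
              _root_.sq_abs (cvec (B i) k)]
        _ = 1 := by rw [Fin.sum_univ_three] at hA1 hB1 ⊢; linarith
    calc ∑ i : Fin 3, |Cor Ssf (A i) (B i)|
        = ∑ i : Fin 3, |∑ k, t k * cvec (A i) k * cvec (B i) k| := by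
          refine Finset.sum_congr rfl fun i _ => ?_
          rw [hcor _ _ (hA.1 i) (hB.1 i)]
      _ ≤ ∑ i : Fin 3, ∑ k, |t k| * |cvec (A i) k * cvec (B i) k| := by
          refine Finset.sum_le_sum fun i _ => ?_
          refine (Finset.abs_sum_le_sum_abs _ _).trans ?_
          refine Finset.sum_le_sum fun k _ => ?_
          exact le_of_eq (by rw [mul_assoc, abs_mul])
      _ = ∑ k, |t k| * ∑ i, |cvec (A i) k * cvec (B i) k| := by
          rw [Finset.sum_comm]
          exact Finset.sum_congr rfl fun k _ => (Finset.mul_sum _ _ _).symm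
      _ ≤ ∑ k : Fin 3, |t k| * 1 := by
          refine Finset.sum_le_sum fun k _ => ?_
          exact mul_le_mul_of_nonneg_left (key k) (abs_nonneg _)
      _ = |t 0| + |t 1| + |t 2| := by rw [Fin.sum_univ_three]; ring
  · have h1 : Cor Ssf σ1 σ1 = t 0 := by
      have d : Dichotomic σ1 := pauli_dich 0
      rw [hcor _ _ d d]
      rw [Fin.sum_univ_three, cvec_pauli.1]
      norm_num [Matrix.cons_val_two]
    have h2 : Cor Ssf σ2 σ2 = t 1 := by
      have d : Dichotomic σ2 := pauli_dich 1
      rw [hcor _ _ d d]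
      rw [Fin.sum_univ_three, cvec_pauli.2.1]
      norm_num [Matrix.cons_val_two]
    have h3 : Cor Ssf σ3 σ3 = t 2 := by
      have d : Dichotomic σ3 := pauli_dich 2
      rw [hcor _ _ d d]
      rw [Fin.sum_univ_three, cvec_pauli.2.2]
      norm_num [Matrix.cons_val_two]
    rw [Fin.sum_univ_three]
    show |Cor Ssf σ1 σ1| + |Cor Ssf σ2 σ2| + |Cor Ssf σ3 σ3| = _
    rw [h1, h2, h3]
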